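/- Let n and r be positive integers and let a be an integer with 1 ≤ a ≤ min(n, r). If A is the top-left a×a submatrix of the integer matrix 𝔍_{n,r}, then |det(A)| = 1. -/

import Mathlib

/-- The matrix `𝔍_{a,b}` (for positive `a`, `b`): `𝔍_{a,a} = I_a`; if `a < b` then
`𝔍_{a,b} = [𝔍_{a,b-a} | I_a]` (horizontal concatenation); if `a > b` then `𝔍_{a,b}`
is `𝔍_{a-b,b}` stacked on top of `I_b` (vertical concatenation). -/
def Jmat : (a : ℕ) → (b : ℕ) → Matrix (Fin a) (Fin b) ℤ
  | a, b =>
    if h0 : a = 0 ∨ b = 0 then Matrix.of fun _ _ => 0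
    else if hab : a < b then
      Matrix.of fun i j =>
        if h : (j : ℕ) < b - a then Jmat a (b - a) i ⟨(j : ℕ), h⟩
        else if (i : ℕ) = (j : ℕ) - (b - a) then 1 else 0
    else if hba : b < a then
      Matrix.of fun i j =>
        if h : (i : ℕ) < a - b then Jmat (a - b) b ⟨(i : ℕ), h⟩ j
        else if (i : ℕ) - (a - b) = (j : ℕ) then 1 else 0
    else
      Matrix.of fun i j => if (i : ℕ) = (j : ℕ) then 1 else 0
termination_by a b => a + b
decreasing_by
  · omega
  · omega

/-- If `A` is the top-left `a × a` submatrix of `𝔍_{n,r}` with `1 ≤ a ≤ min n r`,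
then `|det A| = 1`. -/
lemma Jmat_lt {a b : ℕ} (h0 : 0 < a) (hab : a < b) (i : Fin a) (j : Fin b) :
    Jmat a b i j = if h : (j : ℕ) < b - a then Jmat a (b - a) i ⟨(j : ℕ), h⟩
      else if (i : ℕ) = (j : ℕ) - (b - a) then 1 else 0 := by
  rw [Jmat]
  rw [dif_neg (by omega), dif_pos hab]
  rfl

lemma Jmat_gt {a b : ℕ} (h0 : 0 < b) (hba : b < a) (i : Fin a) (j : Fin b) :
    Jmat a b i j = if h : (i : ℕ) < a - b then Jmat (a - b) b ⟨(i : ℕ), h⟩ j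
      else if (i : ℕ) - (a - b) = (j : ℕ) then 1 else 0 := by
  rw [Jmat]
  rw [dif_neg (by omega), dif_neg (by omega), dif_pos hba]
  rfl

lemma Jmat_diag {a : ℕ} (h0 : 0 < a) (i j : Fin a) :
    Jmat a a i j = if (i : ℕ) = (j : ℕ) then 1 else 0 := by
  rw [Jmat]
  rw [dif_neg (by omega), dif_neg (by omega), dif_neg (by omega)]
  rfl

lemma Jmat_congr {a b : ℕ} {i i' : Fin a} {j j' : Fin b} (hi : (i : ℕ) = (i' : ℕ))
    (hj : (j : ℕ) = (j' : ℕ)) : Jmat a b i j = Jmat a b i' j' := by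
  obtain rfl : i = i' := Fin.ext hi
  obtain rfl : j = j' := Fin.ext hj
  rfl


def rotPerm (c1 c2 : ℕ) : Equiv.Perm (Fin (c1 + c2)) where
  toFun := fun j => if h : (j : ℕ) < c2 then ⟨c1 + (j : ℕ), by omega⟩
    else ⟨(j : ℕ) - c2, by omega⟩
  invFun := fun j => if h : (j : ℕ) < c1 then ⟨c2 + (j : ℕ), by omega⟩
    else ⟨(j : ℕ) - c1, by omega⟩
  left_inv := by
    intro j
    dsimp only
    by_cases h : (j : ℕ) < c2
    · rw [dif_pos h, dif_neg (by simp)]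
      exact Fin.ext (by simp)
    · rw [dif_neg h, dif_pos (by simp; omega)]
      exact Fin.ext (by simp; omega)
  right_inv := by
    intro j
    dsimp only
    by_cases h : (j : ℕ) < c1
    · rw [dif_pos h, dif_neg (by simp)]
      exact Fin.ext (by simp)
    · rw [dif_neg h, dif_pos (by simp; omega)]
      exact Fin.ext (by simp; omega)

def splitEquiv (c1 c2 : ℕ) : Fin (c1 + c2) ≃ (Fin c2 ⊕ Fin c1) where
  toFun := fun i => if h : (i : ℕ) < c2 then Sum.inl ⟨(i : ℕ), h⟩
    else Sum.inr ⟨(i : ℕ) - c2, by omega⟩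
  invFun := Sum.elim (fun a => ⟨(a : ℕ), by omega⟩) (fun b => ⟨c2 + (b : ℕ), by omega⟩)
  left_inv := by
    intro i
    dsimp only
    by_cases h : (i : ℕ) < c2
    · rw [dif_pos h]
      rfl
    · rw [dif_neg h]
      exact Fin.ext (by simp; omega)
  right_inv := by
    rintro (a | b)
    · simp only [Sum.elim_inl]
      exact dif_pos a.isLt
    · simp only [Sum.elim_inr]
      refine (dif_neg (show ¬ (c2 + (b : ℕ) < c2) by omega)).trans ?_
      simp

lemma aux_block (c1 c2 m : ℕ) (hm : m = c1 + c2) (M : Matrix (Fin m) (Fin m) ℤ)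
    (hid : ∀ i j : Fin m, c1 ≤ (j : ℕ) → M i j = if (i : ℕ) = (j : ℕ) - c1 then 1 else 0) :
    |M.det| = |(Matrix.of fun i j : Fin c1 =>
      M ⟨c2 + (i : ℕ), by omega⟩ ⟨(j : ℕ), by omega⟩).det| := by
  subst hm
  have key : M.submatrix id ⇑(rotPerm c1 c2) =
      (Matrix.fromBlocks 1
        (Matrix.of fun (i : Fin c2) (j : Fin c1) => M ⟨(i : ℕ), by omega⟩ ⟨(j : ℕ), by omega⟩)
        0
        (Matrix.of fun i j : Fin c1 => M ⟨c2 + (i : ℕ), by omega⟩ ⟨(j : ℕ), by omega⟩)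
        ).submatrix ⇑(splitEquiv c1 c2) ⇑(splitEquiv c1 c2) := by
    ext i j
    simp only [Matrix.submatrix_apply, id_eq, rotPerm, splitEquiv, Equiv.coe_fn_mk]
    by_cases hi : (i : ℕ) < c2 <;> by_cases hj : (j : ℕ) < c2
    · rw [dif_pos hj, dif_pos hi, dif_pos hj, hid _ _ (by simp)]
      simp only [Matrix.fromBlocks_apply₁₁, Matrix.one_apply, Fin.ext_iff, Fin.val_mk]
      split_ifs <;> omega
    · rw [dif_neg hj, dif_pos hi, dif_neg hj]
      simp only [Matrix.fromBlocks_apply₁₂, Matrix.of_apply]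
    · rw [dif_pos hj, dif_neg hi, dif_pos hj, hid _ _ (by simp)]
      simp only [Matrix.fromBlocks_apply₂₁, Matrix.zero_apply, Fin.val_mk]
      rw [if_neg (by omega)]
    · rw [dif_neg hj, dif_neg hi, dif_neg hj]
      simp only [Matrix.fromBlocks_apply₂₂, Matrix.of_apply]
      congr 1
      exact Fin.ext (by simp; omega)
  have h2 : |(M.submatrix id ⇑(rotPerm c1 c2)).det| = |M.det| := by
    rw [Matrix.det_permute']
    rcases Int.units_eq_one_or (Equiv.Perm.sign (rotPerm c1 c2)) with h | h <;> simp [h]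
  rw [← h2, key, Matrix.det_submatrix_equiv_self, Matrix.det_fromBlocks_zero₂₁,
    Matrix.det_one, one_mul]

open Matrix in
lemma aux_block' (c1 c2 m : ℕ) (hm : m = c1 + c2) (M : Matrix (Fin m) (Fin m) ℤ)
    (hid : ∀ i j : Fin m, c1 ≤ (i : ℕ) → M i j = if (i : ℕ) - c1 = (j : ℕ) then 1 else 0) :
    |M.det| = |(Matrix.of fun i j : Fin c1 =>
      M ⟨(i : ℕ), by omega⟩ ⟨c2 + (j : ℕ), by omega⟩).det| := by
  have hidT : ∀ i j : Fin m, c1 ≤ (j : ℕ) → Mᵀ i j = if (i : ℕ) = (j : ℕ) - c1 then 1 else 0 := by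
    intro i j hj
    rw [Matrix.transpose_apply, hid j i hj]
    split_ifs <;> omega
  have h := aux_block c1 c2 m hm Mᵀ hidT
  rw [Matrix.det_transpose] at h
  rw [h, ← Matrix.det_transpose]
  congr 1

lemma key (N : ℕ) : ∀ (n r s t m : ℕ) (hm : 1 ≤ m) (hsn : s + m ≤ n) (htr : t + m ≤ r)
    (hc1 : s = 0 ∨ t + m = r) (hc2 : t = 0 ∨ s + m = n), n + r ≤ N →
    |(Matrix.of fun i j : Fin m =>
      Jmat n r ⟨s + (i : ℕ), by omega⟩ ⟨t + (j : ℕ), by omega⟩).det| = 1 := by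
  induction N with
  | zero => intro n r s t m hm hsn htr hc1 hc2 hN; omega
  | succ N ih =>
    intro n r s t m hm hsn htr hc1 hc2 hN
    rcases lt_trichotomy n r with hlt | heq | hgt
    · -- n < r
      by_cases hcase : t + m ≤ r - n
      · have e : (Matrix.of fun i j : Fin m =>
            Jmat n r ⟨s + (i : ℕ), by omega⟩ ⟨t + (j : ℕ), by omega⟩)
            = Matrix.of fun i j : Fin m =>
            Jmat n (r - n) ⟨s + (i : ℕ), by omega⟩ ⟨t + (j : ℕ), by omega⟩ := by
          ext i j
          simp only [Matrix.of_apply]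
          rw [Jmat_lt (by omega) hlt, dif_pos (by simp only [Fin.val_mk]; omega)]
        rw [e]
        exact ih n (r - n) s t m hm hsn (by omega) (by omega) hc2 (by omega)
      · by_cases hcase2 : r - n ≤ t
        · -- fully inside the identity block
          have hst : s = t - (r - n) := by omega
          have e : (Matrix.of fun i j : Fin m =>
              Jmat n r ⟨s + (i : ℕ), by omega⟩ ⟨t + (j : ℕ), by omega⟩)
              = (1 : Matrix (Fin m) (Fin m) ℤ) := by
            ext i j
            simp only [Matrix.of_apply, Matrix.one_apply]
            rw [Jmat_lt (by omega) hlt, dif_neg (by simp only [Fin.val_mk]; omega)]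
            simp only [Fin.val_mk]
            by_cases h : i = j
            · rw [if_pos (by rw [h]; omega), if_pos h]
            · have hv : (i : ℕ) ≠ (j : ℕ) := fun hh => h (Fin.ext hh)
              rw [if_neg (by omega), if_neg h]
          rw [e, Matrix.det_one]
          simp
        · -- mixed case: t < r - n < t + m
          have hs0 : s = 0 := by omega
          subst hs0
          have hid : ∀ i j : Fin m, (r - n - t) ≤ (j : ℕ) →
              (Matrix.of fun i j : Fin m =>
                Jmat n r ⟨0 + (i : ℕ), by omega⟩ ⟨t + (j : ℕ), by omega⟩) i j
              = if (i : ℕ) = (j : ℕ) - (r - n - t) then 1 else 0 := by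
            intro i j hj
            simp only [Matrix.of_apply]
            rw [Jmat_lt (by omega) hlt, dif_neg (by simp only [Fin.val_mk]; omega)]
            simp only [Fin.val_mk]
            by_cases hc : (i : ℕ) = (j : ℕ) - (r - n - t)
            · rw [if_pos (by omega), if_pos hc]
            · rw [if_neg (by omega), if_neg hc]
          rw [aux_block (r - n - t) (t + m - (r - n)) m (by omega) _ hid]
          have e : (Matrix.of fun i j : Fin (r - n - t) =>
              (Matrix.of fun i j : Fin m =>
                Jmat n r ⟨0 + (i : ℕ), by omega⟩ ⟨t + (j : ℕ), by omega⟩)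
                ⟨t + m - (r - n) + (i : ℕ), by omega⟩ ⟨(j : ℕ), by omega⟩)
              = Matrix.of fun i j : Fin (r - n - t) =>
              Jmat n (r - n) ⟨t + m - (r - n) + (i : ℕ), by omega⟩ ⟨t + (j : ℕ), by omega⟩ := by
            ext i j
            simp only [Matrix.of_apply]
            rw [Jmat_lt (by omega) hlt, dif_pos (by simp only [Fin.val_mk]; omega)]
            exact Jmat_congr (by simp) (by simp)
          rw [e]
          exact ih n (r - n) (t + m - (r - n)) t (r - n - t) (by omega) (by omega) (by omega)
            (by omega) (by omega) (by omega)
    · -- n = r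
      subst heq
      have hst : s = t := by omega
      have e : (Matrix.of fun i j : Fin m =>
          Jmat n n ⟨s + (i : ℕ), by omega⟩ ⟨t + (j : ℕ), by omega⟩)
          = (1 : Matrix (Fin m) (Fin m) ℤ) := by
        ext i j
        simp only [Matrix.of_apply, Matrix.one_apply]
        rw [Jmat_diag (by omega)]
        simp only [Fin.val_mk]
        by_cases h : i = j
        · rw [if_pos (by rw [h]; omega), if_pos h]
        · have hv : (i : ℕ) ≠ (j : ℕ) := fun hh => h (Fin.ext hh)
          rw [if_neg (by omega), if_neg h]
      rw [e, Matrix.det_one]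
      simp
    · -- n > r
      by_cases hcase : s + m ≤ n - r
      · have e : (Matrix.of fun i j : Fin m =>
            Jmat n r ⟨s + (i : ℕ), by omega⟩ ⟨t + (j : ℕ), by omega⟩)
            = Matrix.of fun i j : Fin m =>
            Jmat (n - r) r ⟨s + (i : ℕ), by omega⟩ ⟨t + (j : ℕ), by omega⟩ := by
          ext i j
          simp only [Matrix.of_apply]
          rw [Jmat_gt (by omega) hgt, dif_pos (by simp only [Fin.val_mk]; omega)]
        rw [e]
        exact ih (n - r) r s t m hm (by omega) htr hc1 (by omega) (by omega)
      · by_cases hcase2 : n - r ≤ s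
        · have hst : t = s - (n - r) := by omega
          have e : (Matrix.of fun i j : Fin m =>
              Jmat n r ⟨s + (i : ℕ), by omega⟩ ⟨t + (j : ℕ), by omega⟩)
              = (1 : Matrix (Fin m) (Fin m) ℤ) := by
            ext i j
            simp only [Matrix.of_apply, Matrix.one_apply]
            rw [Jmat_gt (by omega) hgt, dif_neg (by simp only [Fin.val_mk]; omega)]
            simp only [Fin.val_mk]
            by_cases h : i = j
            · rw [if_pos (by rw [h]; omega), if_pos h]
            · have hv : (i : ℕ) ≠ (j : ℕ) := fun hh => h (Fin.ext hh)
              rw [if_neg (by omega), if_neg h]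
          rw [e, Matrix.det_one]
          simp
        · -- mixed case: s < n - r < s + m
          have ht0 : t = 0 := by omega
          subst ht0
          have hid : ∀ i j : Fin m, (n - r - s) ≤ (i : ℕ) →
              (Matrix.of fun i j : Fin m =>
                Jmat n r ⟨s + (i : ℕ), by omega⟩ ⟨0 + (j : ℕ), by omega⟩) i j
              = if (i : ℕ) - (n - r - s) = (j : ℕ) then 1 else 0 := by
            intro i j hi
            simp only [Matrix.of_apply]
            rw [Jmat_gt (by omega) hgt, dif_neg (by simp only [Fin.val_mk]; omega)]
            simp only [Fin.val_mk]
            by_cases hc : (i : ℕ) - (n - r - s) = (j : ℕ)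
            · rw [if_pos (by omega), if_pos hc]
            · rw [if_neg (by omega), if_neg hc]
          rw [aux_block' (n - r - s) (s + m - (n - r)) m (by omega) _ hid]
          have e : (Matrix.of fun i j : Fin (n - r - s) =>
              (Matrix.of fun i j : Fin m =>
                Jmat n r ⟨s + (i : ℕ), by omega⟩ ⟨0 + (j : ℕ), by omega⟩)
                ⟨(i : ℕ), by omega⟩ ⟨s + m - (n - r) + (j : ℕ), by omega⟩)
              = Matrix.of fun i j : Fin (n - r - s) =>
              Jmat (n - r) r ⟨s + (i : ℕ), by omega⟩ ⟨s + m - (n - r) + (j : ℕ), by omega⟩ := by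
            ext i j
            simp only [Matrix.of_apply]
            rw [Jmat_gt (by omega) hgt, dif_pos (by simp only [Fin.val_mk]; omega)]
            exact Jmat_congr (by simp) (by simp)
          rw [e]
          exact ih (n - r) r s (s + m - (n - r)) (n - r - s) (by omega) (by omega) (by omega)
            (by omega) (by omega) (by omega)


theorem abs_det_topLeft_submatrix_Jmat (n r a : ℕ) (hn : 0 < n) (hr : 0 < r)
    (ha : 1 ≤ a) (han : a ≤ n) (har : a ≤ r) :
    |(Matrix.of fun i j : Fin a =>
        Jmat n r ⟨(i : ℕ), lt_of_lt_of_le i.isLt han⟩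
          ⟨(j : ℕ), lt_of_lt_of_le j.isLt har⟩).det| = 1 := by
  have e : (Matrix.of fun i j : Fin a =>
        Jmat n r ⟨(i : ℕ), lt_of_lt_of_le i.isLt han⟩
          ⟨(j : ℕ), lt_of_lt_of_le j.isLt har⟩)
      = Matrix.of fun i j : Fin a =>
        Jmat n r ⟨0 + (i : ℕ), by omega⟩ ⟨0 + (j : ℕ), by omega⟩ := by
    ext i j
    simp only [Matrix.of_apply]
    exact Jmat_congr (by simp) (by simp)
  rw [e]
  exact key (n + r) n r 0 0 a ha (by omega) (by omega) (Or.inl rfl) (Or.inl rfl) le_rfl
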